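/- Let R be a commutative ring whose prime spectrum is at most countable, and let S ⊆ R be a multiplicative subset. Then there exists an at most countable multiplicative subset T ⊆ S such that the natural map T⁻¹R → S⁻¹R is an isomorphism. -/

import Mathlib

universe u

theorem aux_isLoc {R : Type u} [CommRing R] (T S : Submonoid R) (h : T ≤ S)
    (h' : ∀ s ∈ S, ∃ m : R, m * s ∈ T) : IsLocalization T (Localization S) :=
  { map_units := fun y => IsLocalization.map_units (Localization S) ⟨y.1, h y.2⟩
    surj := fun z => by
      obtain ⟨⟨y, s⟩, e⟩ := IsLocalization.surj S z
      obtain ⟨m, hm⟩ := h' s.1 s.2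
      refine ⟨⟨m * y, ⟨m * s.1, hm⟩⟩, ?_⟩
      simp only [map_mul] at e ⊢
      rw [← mul_assoc, mul_comm z, mul_assoc, e, mul_comm]
    exists_of_eq := fun {x y} e => by
      obtain ⟨c, hc⟩ := (IsLocalization.eq_iff_exists S (Localization S)).mp e
      obtain ⟨m, hm⟩ := h' c.1 c.2
      refine ⟨⟨m * c.1, hm⟩, ?_⟩
      show m * c.1 * x = m * c.1 * y
      rw [mul_assoc, mul_assoc, hc] }

/-- If a commutative ring `R` has (at most) countable prime spectrum, then for any
multiplicative subset `S ⊆ R` there is an (at most) countable multiplicative subset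
`T ⊆ S` such that the natural map `T⁻¹R → S⁻¹R` is an isomorphism, i.e. `S⁻¹R` is
the localization of `R` at `T`. -/
theorem stmt3 (R : Type u) [CommRing R] (hR : Countable (PrimeSpectrum R))
    (S : Submonoid R) :
    ∃ T : Submonoid R, Countable T ∧ T ≤ S ∧ IsLocalization T (Localization S) := by
  classical
  -- index set: primes meeting S
  let ι := {p : PrimeSpectrum R // ∃ x, x ∈ S ∧ x ∈ p.asIdeal}
  have hι : Countable ι := Subtype.countable
  let f : ι → R := fun p => p.2.choose
  have hfS : ∀ p : ι, f p ∈ S := fun p => p.2.choose_spec.1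
  have hfp : ∀ p : ι, f p ∈ p.1.asIdeal := fun p => p.2.choose_spec.2
  refine ⟨Submonoid.closure (Set.range f), ?_, ?_, ?_⟩
  · -- countability
    have hc : (Set.range f).Countable := Set.countable_range f
    haveI : Countable ↥(Set.range f) := hc.to_subtype
    haveI : Countable (FreeMonoid ↥(Set.range f)) :=
      inferInstanceAs (Countable (List ↥(Set.range f)))
    have : (Submonoid.closure (Set.range f) : Set R).Countable := by
      rw [Submonoid.closure_eq_mrange]
      exact Set.countable_range _
    exact this.to_subtype
  · exact Submonoid.closure_le.mpr (Set.range_subset_iff.mpr hfS)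
  · refine aux_isLoc _ S (Submonoid.closure_le.mpr (Set.range_subset_iff.mpr hfS)) ?_
    intro s hs
    by_contra hcon
    push_neg at hcon
    have hdisj : Disjoint (Ideal.span {s} : Set R)
        (Submonoid.closure (Set.range f) : Set R) := by
      rw [Set.disjoint_left]
      intro x hx hx'
      obtain ⟨m, rfl⟩ := Ideal.mem_span_singleton'.mp hx
      exact hcon m hx'
    obtain ⟨p, hp, hple, hpd⟩ := Ideal.exists_le_prime_disjoint _ _ hdisj
    have hsp : s ∈ p := hple (Ideal.subset_span rfl)
    let P : PrimeSpectrum R := ⟨p, hp⟩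
    have hmem : ∃ x, x ∈ S ∧ x ∈ P.asIdeal := ⟨s, hs, hsp⟩
    have : f ⟨P, hmem⟩ ∈ (Submonoid.closure (Set.range f) : Set R) :=
      Submonoid.subset_closure ⟨⟨P, hmem⟩, rfl⟩
    exact Set.disjoint_left.mp hpd (hfp ⟨P, hmem⟩) this
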